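/- Let m ≥ 1 and i ≥ 1 be integers, and let I_i = {(k₁, …, k_i) ∈ ℕ^i : k₁ + k₂ + … + k_i ≤ m − 1}. Then: (a) for every real y, (Σ_{(k₁,…,k_i) ∈ I_i} y^{Σ_{j=1}^{i} j·k_j}) · ∏_{j=1}^{i} (1 − y^j) = ∏_{j=1}^{i} (1 − y^{m−1+j}); and (b) for every y ∈ (0,1), defining T_i = ∏_{j=1}^{i} (1 − y^{m−1+j})²/(1 − y^j), S₀ = 1 − y^{m²}, and S_i = S_{i−1} − y^{m²+i}·T_i for i ≥ 1, one has S_{i−1} = ∏_{j=1}^{i} (1 − y^{m−1+j}) · Σ_{(k₁,…,k_i) ∈ I_i} y^{Σ_{j=1}^{i} (m−1+j)·k_j}. -/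

import Mathlib

noncomputable def Hf (y : ℝ) : ℕ → ℕ → ℕ → ℝ
  | _, 0, _ => 1
  | _, _+1, 0 => 1
  | c, i+1, n+1 => Hf y c i (n+1) + y^(c+1+i) * Hf y c (i+1) n
  termination_by c i n => (i, n)

lemma Hf_zero (y : ℝ) (c n : ℕ) : Hf y c 0 n = 1 := by rw [Hf]
lemma Hf_zero' (y : ℝ) (c i : ℕ) : Hf y c i 0 = 1 := by cases i <;> rw [Hf]
lemma Hf_succ (y : ℝ) (c i n : ℕ) :
    Hf y c (i+1) (n+1) = Hf y c i (n+1) + y^(c+1+i) * Hf y c (i+1) n := by rw [Hf]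

lemma pi_sum_expand {m i : ℕ} (F : (Fin (i+1) → Fin m) → ℝ) :
    ∑ k : Fin (i+1) → Fin m, F k = ∑ t : Fin m, ∑ p : Fin i → Fin m, F (Fin.snoc p t) := by
  calc ∑ k : Fin (i+1) → Fin m, F k
      = ∑ x : Fin m × (Fin i → Fin m),
          F ((Fin.insertNthEquiv (fun _ => Fin m) (Fin.last i)).symm.symm x) :=
        (Equiv.sum_comp (Fin.insertNthEquiv (fun _ => Fin m) (Fin.last i)).symm.symm F).symm
    _ = ∑ t : Fin m, ∑ p : Fin i → Fin m, F (Fin.snoc p t) := by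
        rw [Fintype.sum_prod_type]
        apply Finset.sum_congr rfl; intro t _
        apply Finset.sum_congr rfl; intro p _
        congr 1
        simp [Equiv.symm_symm, Fin.insertNthEquiv, Fin.insertNth_last']

lemma snoc_sum {m i : ℕ} (p : Fin i → Fin m) (t : Fin m) :
    (∑ j : Fin (i+1), (((Fin.snoc p t : Fin (i+1) → Fin m) j) : ℕ)) = (∑ j : Fin i, (p j : ℕ)) + t := by
  rw [Fin.sum_univ_castSucc]; simp

lemma snoc_wt {m i c : ℕ} (p : Fin i → Fin m) (t : Fin m) :
    (∑ j : Fin (i+1), (c+1+(j:ℕ)) * (((Fin.snoc p t : Fin (i+1) → Fin m) j) : ℕ))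
      = (∑ j : Fin i, (c+1+(j:ℕ)) * (p j : ℕ)) + (c+1+i) * t := by
  rw [Fin.sum_univ_castSucc]; simp

lemma Gsum_eq (y : ℝ) (c m : ℕ) : ∀ i n, n < m →
    (∑ k ∈ Finset.univ.filter (fun k : Fin i → Fin m => ∑ j, (k j : ℕ) ≤ n),
      y ^ (∑ j : Fin i, (c + 1 + (j : ℕ)) * (k j : ℕ))) = Hf y c i n := by
  intro i
  induction i with
  | zero =>
    intro n hn
    rw [Hf_zero]
    rw [Finset.filter_true_of_mem (by simp)]
    simp
  | succ i ih =>
    intro n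
    induction n with
    | zero =>
      intro h0
      rw [Hf_zero']
      have : Finset.univ.filter (fun k : Fin (i+1) → Fin m => ∑ j, (k j : ℕ) ≤ 0)
          = {fun _ => (⟨0, h0⟩ : Fin m)} := by
        ext k
        simp only [Finset.mem_filter, Finset.mem_univ, true_and, Finset.mem_singleton,
          Nat.le_zero, Finset.sum_eq_zero_iff, Finset.mem_univ, forall_true_left]
        constructor
        · intro h; funext j; exact Fin.ext (by simpa using h j)
        · intro h; subst h; simp
      rw [this]
      simp
    | succ n ihn =>
      intro hlt
      have hn' : n < m := by omega
      obtain ⟨m', rfl⟩ : ∃ m', m = m'+1 := ⟨m-1, by omega⟩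
      have hnm' : n < m' := by omega
      rw [Finset.sum_filter, pi_sum_expand, Fin.sum_univ_succ]
      simp only [snoc_sum, snoc_wt, Fin.val_zero, Fin.val_succ, add_zero, mul_zero]
      rw [Hf_succ]
      congr 1
      · rw [← Finset.sum_filter, ih (n+1) hlt]
      · -- ∑ t : Fin m', ∑ p, ite (∑p + (t+1) ≤ n+1) (y ^ (w p + (c+1+i)*(t+1))) 0
        --   = y^(c+1+i) * Hf y c (i+1) n
        have step : ∀ (t : Fin m') (p : Fin i → Fin (m'+1)),
            (if (∑ j, (p j : ℕ)) + ((t:ℕ)+1) ≤ n+1 then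
              y ^ ((∑ j : Fin i, (c+1+(j:ℕ)) * (p j : ℕ)) + (c+1+i)*((t:ℕ)+1)) else 0)
            = y^(c+1+i) * (if (∑ j, (p j : ℕ)) + (t:ℕ) ≤ n then
              y ^ ((∑ j : Fin i, (c+1+(j:ℕ)) * (p j : ℕ)) + (c+1+i)*(t:ℕ)) else 0) := by
          intro t p
          rw [mul_ite, mul_zero, ← pow_add]
          congr 1
          · exact propext (by omega)
          · congr 1; ring
        have hD : (∑ t : Fin m', ∑ p : Fin i → Fin (m'+1),
            (if (∑ j, (p j : ℕ)) + (t:ℕ) ≤ n then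
              y ^ ((∑ j : Fin i, (c+1+(j:ℕ)) * (p j : ℕ)) + (c+1+i)*(t:ℕ)) else 0))
            = Hf y c (i+1) n := by
          have := ihn hn'
          rw [Finset.sum_filter, pi_sum_expand, Fin.sum_univ_castSucc] at this
          simp only [snoc_sum, snoc_wt, Fin.coe_castSucc, Fin.val_last] at this
          have hz : (∑ p : Fin i → Fin (m'+1),
              if (∑ j, (p j : ℕ)) + m' ≤ n then
                y ^ ((∑ j : Fin i, (c+1+(j:ℕ)) * (p j : ℕ)) + (c+1+i)*m') else 0) = 0 :=
            Finset.sum_eq_zero (fun p _ => if_neg (by omega))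
          rw [hz, add_zero] at this
          exact this
        rw [← hD, Finset.mul_sum]
        refine Finset.sum_congr rfl fun t _ => ?_
        rw [Finset.mul_sum]
        exact Finset.sum_congr rfl fun p _ => step t p

lemma lemS (y : ℝ) : ∀ i n, (1 - y^(i+1)) * Hf y 0 (i+1) n = (1 - y^(n+1)) * Hf y 0 i (n+1) := by
  intro i
  induction i with
  | zero =>
    intro n
    induction n with
    | zero => simp [Hf_zero, Hf_zero', Hf_succ]
    | succ n ihn =>
      rw [Hf_succ, Hf_zero]
      rw [Hf_zero] at ihn ⊢
      linear_combination y * ihn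
  | succ i ih =>
    intro n
    induction n with
    | zero =>
      have h1 := ih 0
      rw [Hf_zero'] at h1 ⊢
      rw [Hf_succ, Hf_zero']
      linear_combination h1
    | succ n ihn =>
      have h1 := ih (n+1)
      rw [Hf_succ y 0 (i+1) n, Hf_succ y 0 i (n+1)]
      linear_combination y^(i+2) * ihn + h1

lemma lemB (y : ℝ) (c : ℕ) : ∀ i n,
    Hf y c i (n+1) - Hf y c i n = y^(c*(n+1)) * (Hf y 0 i (n+1) - Hf y 0 i n) := by
  intro i
  induction i with
  | zero => intro n; simp [Hf_zero]
  | succ i ih =>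
    intro n
    induction n with
    | zero =>
      rw [Hf_succ y c i 0, Hf_succ y 0 i 0, Hf_zero' y c (i+1), Hf_zero' y 0 (i+1)]
      have h := ih 0
      rw [Hf_zero' y c i, Hf_zero' y 0 i] at h
      linear_combination h
    | succ n ihn =>
      rw [Hf_succ y c i (n+1), Hf_succ y 0 i (n+1)]
      linear_combination ih (n+1) + y^(c+1+i) * ihn - Hf_succ y c i n
        + y^(c*(n+2)) * Hf_succ y 0 i n

lemma lemD (y : ℝ) (i n : ℕ) :
    Hf y 0 i (n+1) - Hf y 0 i n = y^(n+1) * (Hf y 0 i (n+1) - y^i * Hf y 0 i n) := by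
  cases i with
  | zero => simp [Hf_zero]
  | succ i =>
    have hS := lemS y i n
    have hP := Hf_succ y 0 i n
    linear_combination (1 - y^(n+1)) * hP - hS

lemma lemC (y : ℝ) (c i : ℕ) : ∀ n,
    (1 - y^(c+1+i)) * Hf y c (i+1) n = Hf y c i n - y^((c+1)*(n+1)+i) * Hf y 0 i n := by
  intro n
  induction n with
  | zero =>
    rw [Hf_zero' y c (i+1), Hf_zero' y c i, Hf_zero' y 0 i]
    ring
  | succ n ihn =>
    rw [Hf_succ y c i n]
    linear_combination y^(c+1+i) * ihn - y^(c+1+i) * lemB y c i n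
      - y^(c+1+i) * y^(c*(n+1)) * lemD y i n

lemma Hprod (y : ℝ) : ∀ i n,
    Hf y 0 i n * ∏ j ∈ Finset.range i, (1 - y^(j+1)) = ∏ j ∈ Finset.range i, (1 - y^(n+1+j)) := by
  intro i
  induction i with
  | zero => intro n; simp [Hf_zero]
  | succ i ih =>
    intro n
    rw [Finset.prod_range_succ, Finset.prod_range_succ']
    have h2 : ∏ j ∈ Finset.range i, (1 - y^(n+1+(j+1))) = ∏ j ∈ Finset.range i, (1 - y^(n+1+1+j)) :=
      Finset.prod_congr rfl (fun j _ => by rw [show n+1+(j+1)=n+1+1+j from by omega])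
    rw [h2]
    linear_combination (∏ j ∈ Finset.range i, (1 - y^(j+1))) * lemS y i n
      + (1 - y^(n+1)) * ih (n+1)

theorem stmt15 (m i : ℕ) (hm : 1 ≤ m) (hi : 1 ≤ i) :
    (∀ y : ℝ,
      (∑ k ∈ Finset.univ.filter (fun k : Fin i → Fin m => ∑ j, (k j : ℕ) ≤ m - 1),
          y ^ (∑ j : Fin i, ((j : ℕ) + 1) * (k j : ℕ))) *
        ∏ j ∈ Finset.range i, (1 - y^(j+1))
      = ∏ j ∈ Finset.range i, (1 - y^(m+j))) ∧
    (∀ y : ℝ, 0 < y → y < 1 → ∀ S : ℕ → ℝ,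
      S 0 = 1 - y^(m^2) →
      (∀ i' : ℕ, 1 ≤ i' →
        S i' = S (i'-1) - y^(m^2+i') *
          ∏ j ∈ Finset.range i', (1 - y^(m+j))^2 / (1 - y^(j+1))) →
      S (i-1) = (∏ j ∈ Finset.range i, (1 - y^(m+j))) *
        ∑ k ∈ Finset.univ.filter (fun k : Fin i → Fin m => ∑ j, (k j : ℕ) ≤ m - 1),
          y ^ (∑ j : Fin i, (m + (j : ℕ)) * (k j : ℕ))) := by
  obtain ⟨m', rfl⟩ : ∃ m', m = m'+1 := ⟨m-1, by omega⟩
  constructor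
  · intro y
    simp only [Nat.add_sub_cancel]
    have hsum : (∑ k ∈ Finset.univ.filter (fun k : Fin i → Fin (m'+1) => ∑ j, (k j : ℕ) ≤ m'),
          y ^ (∑ j : Fin i, ((j : ℕ) + 1) * (k j : ℕ))) = Hf y 0 i m' := by
      rw [← Gsum_eq y 0 (m'+1) i m' (by omega)]
      refine Finset.sum_congr rfl fun k _ => ?_
      congr 1
      exact Finset.sum_congr rfl fun j _ => by congr 1; omega
    rw [hsum]
    exact Hprod y i m'
  · intro y hy0 hy1 S hS0 hSrec
    obtain ⟨d, rfl⟩ : ∃ d, i = d+1 := ⟨i-1, by omega⟩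
    simp only [Nat.add_sub_cancel]
    suffices h : ∀ e, S e = (∏ j ∈ Finset.range (e+1), (1 - y^(m'+1+j))) * Hf y m' (e+1) m' by
      rw [h d]
      congr 1
      rw [← Gsum_eq y m' (m'+1) (d+1) m' (by omega)]
    intro e
    induction e with
    | zero =>
      rw [hS0]
      have hC := lemC y m' 0 m'
      rw [Hf_zero y m' m', Hf_zero y 0 m'] at hC
      rw [Finset.prod_range_one]
      linear_combination -hC
    | succ e ihe =>
      have hrec := hSrec (e+1) (by omega)
      rw [Nat.add_sub_cancel] at hrec
      rw [hrec, ihe]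
      have hQ : ∀ j ∈ Finset.range (e+1), (1 - y^(j+1)) ≠ 0 := fun j _ => by
        have : y^(j+1) < 1 := pow_lt_one₀ (le_of_lt hy0) hy1 (by omega)
        linarith
      have hd := Finset.prod_ne_zero_iff.mpr hQ
      have hT : ∏ j ∈ Finset.range (e+1), (1 - y^(m'+1+j))^2 / (1 - y^(j+1))
          = Hf y 0 (e+1) m' * ∏ j ∈ Finset.range (e+1), (1 - y^(m'+1+j)) := by
        rw [Finset.prod_div_distrib, Finset.prod_pow, ← Hprod y (e+1) m']
        field_simp
      rw [hT]
      have hC := lemC y m' (e+1) m'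
      linear_combination (-(∏ j ∈ Finset.range (e+1), (1 - y^(m'+1+j)))) * hC
        - Hf y m' (e+1+1) m' * Finset.prod_range_succ (fun j => (1 - y^(m'+1+j))) (e+1)
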